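/- Let D ⊆ 2^{<ω} be a prefix-free set of nonempty binary strings with Σ_{σ∈D} 2^{-|σ|} = 1 and AvgRT(D) = Σ_{σ∈D} |σ|·2^{-|σ|} < ∞, and for σ ∈ 2^{<ω} let N_D(σ) be the largest k such that some initial segment of σ is a concatenation of k elements of D. Then lim_{n→∞} (1/n)·Σ_{σ∈2^n} 2^{-n}·N_D(σ) = 1/AvgRT(D); that is, the extraction rate Rate(Φ, λ) of the functional induced by the DDG-tree with terminal set D equals 1/AvgRT(D). -/

import Mathlib

open Filter

/-- `D ⊆ 2^{<ω}` is prefix-free: no element is a proper initial segment of another. -/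
def PrefixFree (D : Set (List Bool)) : Prop :=
  ∀ σ ∈ D, ∀ τ ∈ D, σ <+: τ → σ = τ

/-- The average running time `AvgRT(D) = Σ_{σ∈D} |σ|·2^{-|σ|}` of the DDG-tree
with terminal set `D`. -/
noncomputable def AvgRT (D : Set (List Bool)) : ℝ :=
  ∑' σ : D, ((σ : List Bool).length : ℝ) * ((1 : ℝ) / 2) ^ (σ : List Bool).length

/-- Some initial segment of `σ` is a concatenation of `k` elements of `D`. -/
def CatPrefix (D : Set (List Bool)) (k : ℕ) (σ : List Bool) : Prop :=
  ∃ B : Fin k → List Bool, (∀ i, B i ∈ D) ∧ (List.ofFn B).flatten <+: σ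

namespace Stmt15

/-- exact concatenation of `k` elements of `D` -/
def ExactCat (D : Set (List Bool)) (k : ℕ) (σ : List Bool) : Prop :=
  ∃ B : Fin k → List Bool, (∀ i, B i ∈ D) ∧ (List.ofFn B).flatten = σ

def Ex (D : Set (List Bool)) (σ : List Bool) : Prop := ∃ k, ExactCat D k σ

variable {D : Set (List Bool)}

theorem exactCat_zero_iff {σ : List Bool} : ExactCat D 0 σ ↔ σ = [] := by
  constructor
  · rintro ⟨B, -, h⟩
    simpa [List.ofFn_zero] using h.symm
  · rintro rfl
    exact ⟨Fin.elim0, fun i => i.elim0, by simp⟩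

theorem exactCat_succ_iff {k : ℕ} {σ : List Bool} :
    ExactCat D (k + 1) σ ↔ ∃ d ρ, d ∈ D ∧ ExactCat D k ρ ∧ σ = d ++ ρ := by
  constructor
  · rintro ⟨B, hB, rfl⟩
    exact ⟨B 0, (List.ofFn fun i => B i.succ).flatten, hB 0,
      ⟨fun i => B i.succ, fun i => hB _, rfl⟩, by rw [List.ofFn_succ, List.flatten_cons]⟩
  · rintro ⟨d, ρ, hd, ⟨B, hB, rfl⟩, rfl⟩
    refine ⟨Fin.cons d B, ?_, ?_⟩
    · intro i
      refine Fin.cases ?_ ?_ i <;> simp [hd, hB]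
    · rw [List.ofFn_succ, List.flatten_cons]
      simp

theorem first_block_eq (hpf : PrefixFree D) {d d' ρ ρ' σ : List Bool}
    (hd : d ∈ D) (hd' : d' ∈ D) (h1 : d ++ ρ <+: σ) (h2 : d' ++ ρ' <+: σ) : d = d' := by
  have p1 : d <+: σ := (List.prefix_append d ρ).trans h1
  have p2 : d' <+: σ := (List.prefix_append d' ρ').trans h2
  rcases List.prefix_or_prefix_of_prefix p1 p2 with h | h
  · exact hpf d hd d' hd' h
  · exact (hpf d' hd' d hd h).symm

/-- monotonicity of decompositions: if `k ≤ k'` then the `k`-decomposition prefix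
is a prefix of the `k'`-decomposition prefix. -/
theorem exact_prefix_mono (hpf : PrefixFree D) :
    ∀ k k' : ℕ, ∀ π π' σ : List Bool, ExactCat D k π → ExactCat D k' π' →
      π <+: σ → π' <+: σ → k ≤ k' → π <+: π' := by
  intro k
  induction k with
  | zero =>
    intro k' π π' σ h1 _ _ _ _
    rw [exactCat_zero_iff.mp h1]
    exact List.nil_prefix
  | succ k ih =>
    intro k' π π' σ h1 h2 hp1 hp2 hk
    obtain ⟨k'', rfl⟩ := Nat.exists_eq_add_of_le hk
    rw [exactCat_succ_iff] at h1
    rw [show k + 1 + k'' = (k + k'') + 1 by ring, exactCat_succ_iff] at h2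
    obtain ⟨d, ρ, hd, he, rfl⟩ := h1
    obtain ⟨d', ρ', hd', he', rfl⟩ := h2
    obtain rfl : d = d' := first_block_eq hpf hd hd' hp1 hp2
    have hρ : ρ <+: σ.drop d.length := by
      rcases hp1 with ⟨t, ht⟩
      refine ⟨t, ?_⟩
      rw [← ht]; simp
    have hρ' : ρ' <+: σ.drop d.length := by
      rcases hp2 with ⟨t, ht⟩
      refine ⟨t, ?_⟩
      rw [← ht]; simp
    obtain ⟨t, rfl⟩ := ih (k + k'') ρ ρ' (σ.drop d.length) he he' hρ hρ' (by omega)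
    exact ⟨t, by rw [List.append_assoc]⟩

end Stmt15

namespace Stmt15
variable {D : Set (List Bool)}

theorem exact_unique (hpf : PrefixFree D) {k : ℕ} {π π' σ : List Bool}
    (h1 : ExactCat D k π) (h2 : ExactCat D k π') (hp1 : π <+: σ) (hp2 : π' <+: σ) :
    π = π' := by
  have a := exact_prefix_mono hpf k k π π' σ h1 h2 hp1 hp2 le_rfl
  have b := exact_prefix_mono hpf k k π' π σ h2 h1 hp2 hp1 le_rfl
  exact a.eq_of_length (le_antisymm a.length_le b.length_le)

theorem exact_k_unique (hpf : PrefixFree D) (hne : ∀ σ ∈ D, σ ≠ ([] : List Bool)) :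
    ∀ k k' : ℕ, ∀ π : List Bool, ExactCat D k π → ExactCat D k' π → k = k' := by
  intro k
  induction k with
  | zero =>
    intro k' π h1 h2
    rw [exactCat_zero_iff.mp h1] at h2
    cases k' with
    | zero => rfl
    | succ k' =>
      rw [exactCat_succ_iff] at h2
      obtain ⟨d, ρ, hd, -, hdρ⟩ := h2
      exact absurd (List.append_eq_nil_iff.mp hdρ.symm).1 (hne d hd)
  | succ k ih =>
    intro k' π h1 h2
    cases k' with
    | zero =>
      rw [exactCat_zero_iff.mp h2] at h1
      rw [exactCat_succ_iff] at h1
      obtain ⟨d, ρ, hd, -, hdρ⟩ := h1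
      exact absurd (List.append_eq_nil_iff.mp hdρ.symm).1 (hne d hd)
    | succ k' =>
      rw [exactCat_succ_iff] at h1 h2
      obtain ⟨d, ρ, hd, he, rfl⟩ := h1
      obtain ⟨d', ρ', hd', he', hdd⟩ := h2
      obtain rfl : d = d' := first_block_eq hpf hd hd' (List.prefix_rfl (l := d ++ ρ))
        (by rw [hdd])
      obtain rfl : ρ = ρ' := List.append_cancel_left hdd
      rw [ih k' ρ he he']

theorem catPrefix_iff {k : ℕ} {σ : List Bool} :
    CatPrefix D k σ ↔ ∃ π, ExactCat D k π ∧ π <+: σ := by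
  constructor
  · rintro ⟨B, hB, hp⟩
    exact ⟨(List.ofFn B).flatten, ⟨B, hB, rfl⟩, hp⟩
  · rintro ⟨π, ⟨B, hB, rfl⟩, hp⟩
    exact ⟨B, hB, hp⟩

theorem catPrefix_mono {k k' : ℕ} {σ : List Bool} (h : k' ≤ k) (hc : CatPrefix D k σ) :
    CatPrefix D k' σ := by
  obtain ⟨B, hB, hp⟩ := hc
  refine ⟨Fin.take k' h B, fun i => hB _, ?_⟩
  rw [Fin.ofFn_take_eq_take_ofFn]
  refine List.IsPrefix.trans ?_ hp
  rcases (List.take_prefix k' (List.ofFn B)) with ⟨t, ht⟩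
  exact ⟨t.flatten, by rw [← List.flatten_append, ht]⟩

theorem exactCat_length_ge (hne : ∀ σ ∈ D, σ ≠ ([] : List Bool)) {k : ℕ} {π : List Bool}
    (h : ExactCat D k π) : k ≤ π.length := by
  obtain ⟨B, hB, rfl⟩ := h
  rw [List.length_flatten, List.map_ofFn, List.sum_ofFn]
  calc (k : ℕ) = ∑ _i : Fin k, 1 := by simp
  _ ≤ ∑ i : Fin k, (B i).length := by
      refine Finset.sum_le_sum fun i _ => ?_
      have := hne (B i) (hB i)
      cases hBi : B i with
      | nil => exact absurd hBi this
      | cons a l => simp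
end Stmt15

namespace Stmt15
open Classical in
noncomputable def Sn (n : ℕ) : Finset (List Bool) :=
  (Finset.univ : Finset (Fin n → Bool)).image List.ofFn

theorem mem_Sn {n : ℕ} {σ : List Bool} : σ ∈ Sn n ↔ σ.length = n := by
  constructor
  · rintro h
    obtain ⟨f, -, rfl⟩ := Finset.mem_image.mp h
    simp
  · rintro rfl
    exact Finset.mem_image.mpr ⟨fun i => σ[i], Finset.mem_univ _, List.ofFn_getElem⟩

theorem card_Sn (n : ℕ) : (Sn n).card = 2 ^ n := by
  rw [Sn, Finset.card_image_of_injective _ List.ofFn_injective]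
  simp

open Classical in
noncomputable def W (D : Set (List Bool)) (j : ℕ) : ℕ :=
  ((Sn j).filter (Ex D)).card

theorem DF_finite (D : Set (List Bool)) (t : ℕ) :
    {σ : D | (σ : List Bool).length ≤ t}.Finite :=
  Set.Finite.preimage (Subtype.val_injective.injOn) (List.finite_length_le Bool t)

noncomputable def DF (D : Set (List Bool)) (t : ℕ) : Finset D :=
  (DF_finite D t).toFinset

theorem mem_DF {D : Set (List Bool)} {t : ℕ} {d : D} :
    d ∈ DF D t ↔ (d : List Bool).length ≤ t := by
  simp [DF, Set.Finite.mem_toFinset]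

theorem Sn_zero : Sn 0 = {([] : List Bool)} := by
  ext σ
  simp [mem_Sn, List.length_eq_zero_iff]

theorem W_zero (D : Set (List Bool)) : W D 0 = 1 := by
  classical
  rw [W, Sn_zero, Finset.filter_singleton, if_pos ⟨0, exactCat_zero_iff.mpr rfl⟩]
  congr

variable {D : Set (List Bool)}

theorem filter_Sn_eq (hpf : PrefixFree D) (hne : ∀ σ ∈ D, σ ≠ ([] : List Bool))
    {j : ℕ} (hj : 1 ≤ j) [DecidablePred (Ex D)] :
    (Sn j).filter (Ex D) = (DF D j).biUnion
      (fun d => ((Sn (j - (d : List Bool).length)).filter (Ex D)).image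
        ((d : List Bool) ++ ·)) := by
  ext σ
  simp only [Finset.mem_filter, Finset.mem_biUnion, Finset.mem_image]
  constructor
  · rintro ⟨hσ, k, hk⟩
    have hlen : σ.length = j := mem_Sn.mp hσ
    cases k with
    | zero =>
      rw [exactCat_zero_iff.mp hk] at hlen
      simp at hlen; omega
    | succ k =>
      rw [exactCat_succ_iff] at hk
      obtain ⟨d, ρ, hd, he, rfl⟩ := hk
      have hdj : d.length ≤ j := by
        rw [← hlen]; simp
      refine ⟨⟨d, hd⟩, mem_DF.mpr hdj, ρ, ⟨mem_Sn.mpr ?_, k, he⟩, rfl⟩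
      show ρ.length = j - d.length
      simp at hlen; omega
  · rintro ⟨d, hdj, ρ, ⟨hρ, k, he⟩, rfl⟩
    have hdj' := mem_DF.mp hdj
    have hρl := mem_Sn.mp hρ
    refine ⟨mem_Sn.mpr (by simp; omega), k + 1, exactCat_succ_iff.mpr ⟨d, ρ, d.2, he, rfl⟩⟩

theorem W_rec (hpf : PrefixFree D) (hne : ∀ σ ∈ D, σ ≠ ([] : List Bool))
    {j : ℕ} (hj : 1 ≤ j) :
    W D j = ∑ d ∈ DF D j, W D (j - (d : List Bool).length) := by
  classical
  rw [W, filter_Sn_eq hpf hne hj, Finset.card_biUnion]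
  · refine Finset.sum_congr rfl fun d _ => ?_
    rw [Finset.card_image_of_injective _ (fun a b h => List.append_cancel_left h), W]
  · intro d _ d' _ hdd'
    rw [Function.onFun, Finset.disjoint_left]
    rintro x hx hx'
    obtain ⟨τ, -, rfl⟩ := Finset.mem_image.mp hx
    obtain ⟨τ', -, he⟩ := Finset.mem_image.mp hx'
    have : (d' : List Bool) = (d : List Bool) :=
      first_block_eq hpf d'.2 d.2 (by rw [he]) (List.prefix_rfl)
    exact hdd' (Subtype.ext this.symm)
end Stmt15

namespace Stmt15
variable {D : Set (List Bool)}

theorem card_filter_Ex_take (hpf : PrefixFree D) (hne : ∀ σ ∈ D, σ ≠ ([] : List Bool))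
    (N : List Bool → ℕ)
    (hN : ∀ σ : List Bool, CatPrefix D (N σ) σ ∧ ∀ k, CatPrefix D k σ → k ≤ N σ)
    {n : ℕ} {σ : List Bool} (hσ : σ.length = n) [DecidablePred (Ex D)] :
    ((Finset.range (n + 1)).filter (fun j => Ex D (σ.take j))).card = N σ + 1 := by
  classical
  have key : ∀ k, k ≤ N σ → CatPrefix D k σ := fun k hk => catPrefix_mono hk (hN σ).1
  -- the canonical decomposition prefix for k ≤ N σ
  have hjmem : ∀ j ∈ (Finset.range (n + 1)).filter (fun j => Ex D (σ.take j)),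
      Ex D (σ.take j) := fun j hj => (Finset.mem_filter.mp hj).2
  rw [show N σ + 1 = (Finset.range (N σ + 1)).card by simp]
  refine Finset.card_bij'
    (i := fun j hj => Classical.choose (hjmem j hj))
    (j := fun k hk =>
      (List.ofFn (Classical.choose (key k (Nat.lt_succ_iff.mp (Finset.mem_range.mp hk))))).flatten.length)
    ?_ ?_ ?_ ?_
  · intro j hj
    have hspec := Classical.choose_spec (hjmem j hj)
    refine Finset.mem_range.mpr (Nat.lt_succ_iff.mpr ((hN σ).2 _ ?_))
    exact catPrefix_iff.mpr ⟨σ.take j, hspec, List.take_prefix j σ⟩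
  · intro k hk
    set hc := key k (Nat.lt_succ_iff.mp (Finset.mem_range.mp hk)) with hhc
    obtain ⟨hB, hp⟩ := Classical.choose_spec hc
    set π := (List.ofFn (Classical.choose hc)).flatten with hπ
    refine Finset.mem_filter.mpr ⟨Finset.mem_range.mpr (Nat.lt_succ_iff.mpr ?_), ?_⟩
    · exact hσ ▸ hp.length_le
    · refine ⟨k, ?_⟩
      rw [← List.prefix_iff_eq_take.mp hp]
      exact ⟨Classical.choose hc, hB, rfl⟩
  · intro j hj
    have hspec := Classical.choose_spec (hjmem j hj)
    set k := Classical.choose (hjmem j hj) with hk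
    have hkN : k ≤ N σ := (hN σ).2 _ (catPrefix_iff.mpr ⟨σ.take j, hspec, List.take_prefix j σ⟩)
    set hc := key k hkN with hhc
    obtain ⟨hB, hp⟩ := Classical.choose_spec hc
    have huniq : (List.ofFn (Classical.choose hc)).flatten = σ.take j :=
      exact_unique hpf ⟨Classical.choose hc, hB, rfl⟩ hspec hp (List.take_prefix j σ)
    have hjn : j ≤ n := Nat.lt_succ_iff.mp (Finset.mem_range.mp (Finset.mem_filter.mp hj).1)
    simp only [huniq]
    rw [List.length_take]
    omega
  · intro k hk
    set hc := key k (Nat.lt_succ_iff.mp (Finset.mem_range.mp hk)) with hhc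
    obtain ⟨hB, hp⟩ := Classical.choose_spec hc
    set π := (List.ofFn (Classical.choose hc)).flatten with hπ
    set j := π.length with hj
    have htake : σ.take j = π := (List.prefix_iff_eq_take.mp hp).symm
    have hmem : j ∈ (Finset.range (n + 1)).filter (fun j => Ex D (σ.take j)) := by
      refine Finset.mem_filter.mpr ⟨Finset.mem_range.mpr (Nat.lt_succ_iff.mpr (hσ ▸ hp.length_le)), ?_⟩
      exact ⟨k, htake ▸ ⟨Classical.choose hc, hB, rfl⟩⟩
    have hspec := Classical.choose_spec (hjmem j hmem)
    have h2 : ExactCat D k (σ.take j) := by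
      rw [htake]; exact ⟨Classical.choose hc, hB, rfl⟩
    exact exact_k_unique hpf hne _ _ _ hspec h2
end Stmt15

namespace Stmt15
variable {D : Set (List Bool)}

theorem card_filter_take {n j : ℕ} (hj : j ≤ n) [DecidablePred (Ex D)] :
    ((Sn n).filter (fun σ => Ex D (σ.take j))).card = W D j * 2 ^ (n - j) := by
  classical
  have himg : (Sn n).filter (fun σ => Ex D (σ.take j)) =
      (((Sn j).filter (Ex D)) ×ˢ Sn (n - j)).image (fun p => p.1 ++ p.2) := by
    ext σ
    simp only [Finset.mem_filter, Finset.mem_image, Finset.mem_product]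
    constructor
    · rintro ⟨hσ, hex⟩
      have hl := mem_Sn.mp hσ
      refine ⟨(σ.take j, σ.drop j), ⟨⟨mem_Sn.mpr ?_, hex⟩, mem_Sn.mpr ?_⟩, List.take_append_drop j σ⟩
      · rw [List.length_take]; omega
      · rw [List.length_drop]; omega
    · rintro ⟨⟨π, ρ⟩, ⟨⟨hπ, hex⟩, hρ⟩, rfl⟩
      have hπl : π.length = j := mem_Sn.mp hπ
      have hρl : ρ.length = n - j := mem_Sn.mp hρ
      have htake : (π ++ ρ).take j = π := by rw [← hπl, List.take_left]
      refine ⟨mem_Sn.mpr (by show (π ++ ρ).length = n; simp only [List.length_append]; omega), ?_⟩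
      rw [htake]; exact hex
  have hinj : Set.InjOn (fun p : List Bool × List Bool => p.1 ++ p.2)
      ↑(((Sn j).filter (Ex D)) ×ˢ Sn (n - j)) := by
    rintro ⟨π, ρ⟩ hp ⟨π', ρ'⟩ hp' he
    simp only [Finset.coe_filter, Finset.mem_product, Set.mem_setOf_eq, Finset.mem_coe,
      Finset.mem_filter] at hp hp'
    have h1 : π.length = j := mem_Sn.mp hp.1.1
    have h2 : π'.length = j := mem_Sn.mp hp'.1.1
    obtain ⟨ha, hb⟩ := List.append_inj he (h1.trans h2.symm)
    exact Prod.ext ha hb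
  rw [himg, Finset.card_image_of_injOn hinj, Finset.card_product, card_Sn, W,
    Finset.filter_congr_decidable]
  congr

theorem sum_N_add_one (hpf : PrefixFree D) (hne : ∀ σ ∈ D, σ ≠ ([] : List Bool))
    (N : List Bool → ℕ)
    (hN : ∀ σ : List Bool, CatPrefix D (N σ) σ ∧ ∀ k, CatPrefix D k σ → k ≤ N σ)
    (n : ℕ) :
    ∑ σ ∈ Sn n, (N σ + 1) = ∑ j ∈ Finset.range (n + 1), W D j * 2 ^ (n - j) := by
  classical
  have h1 : ∀ σ ∈ Sn n, N σ + 1 =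
      ((Finset.range (n + 1)).filter (fun j => Ex D (σ.take j))).card := by
    intro σ hσ
    rw [card_filter_Ex_take hpf hne N hN (mem_Sn.mp hσ)]
  rw [Finset.sum_congr rfl h1]
  simp only [Finset.card_filter]
  rw [Finset.sum_comm]
  refine Finset.sum_congr rfl fun j hj => ?_
  rw [← Finset.card_filter, card_filter_take (Nat.lt_succ_iff.mp (Finset.mem_range.mp hj))]
end Stmt15

namespace Stmt15

noncomputable def u (D : Set (List Bool)) (j : ℕ) : ℝ := (1 / 2 : ℝ) ^ j * W D j

noncomputable def T (D : Set (List Bool)) (t : ℕ) : ℝ :=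
  1 - ∑ d ∈ DF D t, (1 / 2 : ℝ) ^ (d : List Bool).length

noncomputable def G (D : Set (List Bool)) (M : ℕ) : ℝ :=
  ∑ t ∈ Finset.range (M + 1), T D t

noncomputable def eRen (D : Set (List Bool)) (n : ℕ) : ℝ :=
  ∑ j ∈ Finset.range (n + 1), u D j

variable {D : Set (List Bool)}

theorem u_nonneg (j : ℕ) : 0 ≤ u D j :=
  mul_nonneg (by positivity) (Nat.cast_nonneg _)

theorem u_zero : u D 0 = 1 := by simp [u, W_zero]

theorem len_pos (hne : ∀ σ ∈ D, σ ≠ ([] : List Bool)) (d : D) :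
    1 ≤ (d : List Bool).length :=
  List.length_pos_iff.mpr (hne _ d.2)

theorem DF_zero (hne : ∀ σ ∈ D, σ ≠ ([] : List Bool)) : DF D 0 = ∅ := by
  ext d
  simp only [mem_DF, Finset.notMem_empty, iff_false]
  have := len_pos hne d
  omega

theorem T_zero (hne : ∀ σ ∈ D, σ ≠ ([] : List Bool)) : T D 0 = 1 := by
  simp [T, DF_zero hne]

theorem u_rec (hpf : PrefixFree D) (hne : ∀ σ ∈ D, σ ≠ ([] : List Bool))
    {j : ℕ} (hj : 1 ≤ j) :
    u D j = ∑ d ∈ DF D j, (1 / 2 : ℝ) ^ (d : List Bool).length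
      * u D (j - (d : List Bool).length) := by
  rw [u, W_rec hpf hne hj]
  push_cast
  rw [Finset.mul_sum]
  refine Finset.sum_congr rfl fun d hd => ?_
  have h1 : (d : List Bool).length ≤ j := mem_DF.mp hd
  have hpow : (1 / 2 : ℝ) ^ j = (1 / 2 : ℝ) ^ (d : List Bool).length
      * (1 / 2 : ℝ) ^ (j - (d : List Bool).length) := by
    rw [← pow_add]; congr 1; omega
  rw [u, hpow]; ring

theorem key_identity (hpf : PrefixFree D) (hne : ∀ σ ∈ D, σ ≠ ([] : List Bool)) :
    ∀ i : ℕ, ∑ j ∈ Finset.range (i + 1), u D j * T D (i - j) = 1 := by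
  intro i
  induction i using Nat.strong_induction_on with
  | _ i ih =>
  rw [Finset.sum_range_succ' (fun j => u D j * T D (i - j))]
  have step1 : ∀ j ∈ Finset.range i, u D (j + 1) * T D (i - (j + 1)) =
      ∑ d ∈ DF D i, (if (d : List Bool).length ≤ j + 1 then
        (1 / 2 : ℝ) ^ (d : List Bool).length
          * u D (j + 1 - (d : List Bool).length) * T D (i - (j + 1)) else 0) := by
    intro j hj
    have hji : j + 1 ≤ i := Finset.mem_range.mp hj
    have hDF : DF D (j + 1) = (DF D i).filter
        (fun d : D => (d : List Bool).length ≤ j + 1) := by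
      ext d
      simp only [mem_DF, Finset.mem_filter, mem_DF]
      omega
    rw [u_rec hpf hne (by omega), Finset.sum_mul, hDF, Finset.sum_filter]
  rw [Finset.sum_congr rfl step1, Finset.sum_comm]
  have step2 : ∀ d ∈ DF D i,
      (∑ j ∈ Finset.range i, if (d : List Bool).length ≤ j + 1 then
        (1 / 2 : ℝ) ^ (d : List Bool).length
          * u D (j + 1 - (d : List Bool).length) * T D (i - (j + 1)) else 0)
      = (1 / 2 : ℝ) ^ (d : List Bool).length := by
    intro d hd
    have hℓ1 : 1 ≤ (d : List Bool).length := len_pos hne d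
    have hℓi : (d : List Bool).length ≤ i := mem_DF.mp hd
    set ℓ := (d : List Bool).length with hℓ
    rw [← Finset.sum_filter]
    have hfil : (Finset.range i).filter (fun j => ℓ ≤ j + 1) = Finset.Ico (ℓ - 1) i := by
      ext j
      simp only [Finset.mem_filter, Finset.mem_range, Finset.mem_Ico]
      omega
    rw [hfil, Finset.sum_Ico_eq_sum_range]
    have hre : ∀ t, ℓ - 1 + t + 1 - ℓ = t := fun t => by omega
    have step3 : ∀ t ∈ Finset.range (i - (ℓ - 1)),
        (1 / 2 : ℝ) ^ ℓ * u D (ℓ - 1 + t + 1 - ℓ) * T D (i - (ℓ - 1 + t + 1))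
        = (1 / 2 : ℝ) ^ ℓ * (u D t * T D ((i - ℓ) - t)) := by
      intro t ht
      rw [hre t, show i - (ℓ - 1 + t + 1) = (i - ℓ) - t by omega]
      ring
    rw [Finset.sum_congr rfl step3, ← Finset.mul_sum,
      show i - (ℓ - 1) = (i - ℓ) + 1 by omega, ih (i - ℓ) (by omega), mul_one]
  rw [Finset.sum_congr rfl step2, u_zero, Nat.sub_zero, one_mul, T]
  ring

end Stmt15

namespace Stmt15
variable {D : Set (List Bool)}

theorem summable_w (hne : ∀ σ ∈ D, σ ≠ ([] : List Bool))
    (hfin : Summable (fun σ : D =>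
      ((σ : List Bool).length : ℝ) * ((1 : ℝ) / 2) ^ (σ : List Bool).length)) :
    Summable (fun σ : D => ((1 : ℝ) / 2) ^ (σ : List Bool).length) := by
  refine Summable.of_nonneg_of_le (fun σ => by positivity) (fun σ => ?_) hfin
  refine le_mul_of_one_le_left (by positivity) ?_
  exact_mod_cast len_pos hne σ

theorem T_eq_tsum (hne : ∀ σ ∈ D, σ ≠ ([] : List Bool))
    (hsum : ∑' σ : D, ((1 : ℝ) / 2) ^ (σ : List Bool).length = 1)
    (hfin : Summable (fun σ : D =>
      ((σ : List Bool).length : ℝ) * ((1 : ℝ) / 2) ^ (σ : List Bool).length))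
    (t : ℕ) :
    T D t = ∑' x : ((DF D t : Set D)ᶜ : Set D), ((1 : ℝ) / 2) ^ (x : List Bool).length := by
  have h := Summable.sum_add_tsum_compl (s := DF D t) (summable_w hne hfin)
  rw [hsum] at h
  rw [T]
  linarith [h]

theorem T_nonneg (hne : ∀ σ ∈ D, σ ≠ ([] : List Bool))
    (hsum : ∑' σ : D, ((1 : ℝ) / 2) ^ (σ : List Bool).length = 1)
    (hfin : Summable (fun σ : D =>
      ((σ : List Bool).length : ℝ) * ((1 : ℝ) / 2) ^ (σ : List Bool).length))
    (t : ℕ) : 0 ≤ T D t := by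
  rw [T_eq_tsum hne hsum hfin t]
  exact tsum_nonneg fun x => by positivity

theorem G_ge_one (hne : ∀ σ ∈ D, σ ≠ ([] : List Bool))
    (hsum : ∑' σ : D, ((1 : ℝ) / 2) ^ (σ : List Bool).length = 1)
    (hfin : Summable (fun σ : D =>
      ((σ : List Bool).length : ℝ) * ((1 : ℝ) / 2) ^ (σ : List Bool).length))
    (M : ℕ) : 1 ≤ G D M := by
  have h0 : T D 0 = 1 := T_zero hne
  calc (1 : ℝ) = ∑ t ∈ Finset.range 1, T D t := by simp [h0]
  _ ≤ ∑ t ∈ Finset.range (M + 1), T D t := by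
      refine Finset.sum_le_sum_of_subset_of_nonneg ?_ fun t _ _ => T_nonneg hne hsum hfin t
      exact Finset.range_subset_range.mpr (by omega)

theorem G_mono (hne : ∀ σ ∈ D, σ ≠ ([] : List Bool))
    (hsum : ∑' σ : D, ((1 : ℝ) / 2) ^ (σ : List Bool).length = 1)
    (hfin : Summable (fun σ : D =>
      ((σ : List Bool).length : ℝ) * ((1 : ℝ) / 2) ^ (σ : List Bool).length)) :
    Monotone (G D) := by
  intro M M' h
  refine Finset.sum_le_sum_of_subset_of_nonneg ?_ fun t _ _ => T_nonneg hne hsum hfin t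
  exact Finset.range_subset_range.mpr (by omega)

theorem T_eq_tsum' (hne : ∀ σ ∈ D, σ ≠ ([] : List Bool))
    (hsum : ∑' σ : D, ((1 : ℝ) / 2) ^ (σ : List Bool).length = 1)
    (hfin : Summable (fun σ : D =>
      ((σ : List Bool).length : ℝ) * ((1 : ℝ) / 2) ^ (σ : List Bool).length))
    (t : ℕ) :
    T D t = ∑' σ : D, (if t < (σ : List Bool).length then
      ((1 : ℝ) / 2) ^ (σ : List Bool).length else 0) := by
  classical
  rw [T_eq_tsum hne hsum hfin t]
  rw [show (∑' x : ((DF D t : Set D)ᶜ : Set D), ((1 : ℝ) / 2) ^ (x : List Bool).length)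
      = ∑' σ : D, Set.indicator ((DF D t : Set D)ᶜ)
        (fun σ : D => ((1 : ℝ) / 2) ^ (σ : List Bool).length) σ from _root_.tsum_subtype ((DF D t : Set D)ᶜ)
        (fun σ : D => ((1 : ℝ) / 2) ^ (σ : List Bool).length)]
  refine tsum_congr fun σ => ?_
  rw [Set.indicator_apply]
  have : σ ∈ ((DF D t : Set D)ᶜ : Set D) ↔ t < (σ : List Bool).length := by
    simp [mem_DF]
  split_ifs with h1 h2 h2 <;> first | rfl | (exfalso; tauto)

theorem G_eq_tsum (hne : ∀ σ ∈ D, σ ≠ ([] : List Bool))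
    (hsum : ∑' σ : D, ((1 : ℝ) / 2) ^ (σ : List Bool).length = 1)
    (hfin : Summable (fun σ : D =>
      ((σ : List Bool).length : ℝ) * ((1 : ℝ) / 2) ^ (σ : List Bool).length))
    (M : ℕ) :
    G D M = ∑' σ : D, (min ((σ : List Bool).length) (M + 1) : ℝ)
      * ((1 : ℝ) / 2) ^ (σ : List Bool).length := by
  classical
  have hsummand : ∀ t : ℕ, Summable (fun σ : D => if t < (σ : List Bool).length then
      ((1 : ℝ) / 2) ^ (σ : List Bool).length else 0) := by
    intro t
    refine Summable.of_nonneg_of_le (fun σ => by positivity) (fun σ => ?_)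
      (summable_w hne hfin)
    split_ifs <;> simp [le_refl]
  have : G D M = ∑ t ∈ Finset.range (M + 1), ∑' σ : D,
      (if t < (σ : List Bool).length then ((1 : ℝ) / 2) ^ (σ : List Bool).length else 0) :=
    Finset.sum_congr rfl fun t _ => T_eq_tsum' hne hsum hfin t
  rw [this, ← Summable.tsum_finsetSum (fun t _ => hsummand t)]
  refine tsum_congr fun σ => ?_
  have hfil : (Finset.range (M + 1)).filter (fun t => t < (σ : List Bool).length)
      = Finset.range (min (M + 1) ((σ : List Bool).length)) := by
    ext t; simp only [Finset.mem_filter, Finset.mem_range, lt_min_iff]; try omega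
  rw [← Finset.sum_filter, hfil, Finset.sum_const, Finset.card_range, nsmul_eq_mul]
  congr 1
  push_cast [min_comm]
  rfl

end Stmt15

namespace Stmt15
variable {D : Set (List Bool)}

theorem summable_min (hfin : Summable (fun σ : D =>
      ((σ : List Bool).length : ℝ) * ((1 : ℝ) / 2) ^ (σ : List Bool).length)) (M : ℕ) :
    Summable (fun σ : D => (min ((σ : List Bool).length) (M + 1) : ℝ)
      * ((1 : ℝ) / 2) ^ (σ : List Bool).length) := by
  refine Summable.of_nonneg_of_le (fun σ => by positivity) (fun σ => ?_) hfin
  refine mul_le_mul_of_nonneg_right ?_ (by positivity)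
  exact_mod_cast min_le_left _ _

theorem G_le_mu (hne : ∀ σ ∈ D, σ ≠ ([] : List Bool))
    (hsum : ∑' σ : D, ((1 : ℝ) / 2) ^ (σ : List Bool).length = 1)
    (hfin : Summable (fun σ : D =>
      ((σ : List Bool).length : ℝ) * ((1 : ℝ) / 2) ^ (σ : List Bool).length))
    (M : ℕ) : G D M ≤ AvgRT D := by
  rw [G_eq_tsum hne hsum hfin M, AvgRT]
  refine Summable.tsum_le_tsum (fun σ => ?_) (summable_min hfin M) hfin
  refine mul_le_mul_of_nonneg_right ?_ (by positivity)
  exact_mod_cast min_le_left _ _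

theorem G_tendsto (hne : ∀ σ ∈ D, σ ≠ ([] : List Bool))
    (hsum : ∑' σ : D, ((1 : ℝ) / 2) ^ (σ : List Bool).length = 1)
    (hfin : Summable (fun σ : D =>
      ((σ : List Bool).length : ℝ) * ((1 : ℝ) / 2) ^ (σ : List Bool).length)) :
    Tendsto (G D) atTop (nhds (AvgRT D)) := by
  classical
  set f : D → ℝ := fun σ => ((σ : List Bool).length : ℝ) * ((1 : ℝ) / 2) ^ (σ : List Bool).length
    with hf
  have htail : Tendsto (fun M : ℕ => ∑' x : {x : D // x ∉ DF D (M + 1)}, f x)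
      atTop (nhds 0) := by
    have h1 := tendsto_tsum_compl_atTop_zero f
    have h2 : Tendsto (fun M : ℕ => DF D (M + 1)) atTop atTop := by
      refine tendsto_atTop_finset_of_monotone (fun M M' h => ?_) (fun x => ?_)
      · intro x hx
        rw [mem_DF] at hx ⊢
        omega
      · exact ⟨(x : List Bool).length, mem_DF.mpr (by omega)⟩
    exact h1.comp h2
  have hdiff : Tendsto (fun M => AvgRT D - G D M) atTop (nhds 0) := by
    refine squeeze_zero (fun M => sub_nonneg.mpr (G_le_mu hne hsum hfin M)) (fun M => ?_) htail
    rw [G_eq_tsum hne hsum hfin M, AvgRT, ← Summable.tsum_sub hfin (summable_min hfin M)]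
    have hsubty : (∑' x : {x : D // x ∉ DF D (M + 1)}, f x)
        = ∑' σ : D, Set.indicator {x : D | x ∉ DF D (M + 1)} f σ :=
      _root_.tsum_subtype {x : D | x ∉ DF D (M + 1)} f
    rw [hsubty]
    refine Summable.tsum_le_tsum (fun σ => ?_) (Summable.sub hfin (summable_min hfin M)) ?_
    · rw [Set.indicator_apply]
      split_ifs with h
      · have h0 : 0 ≤ min (((σ : List Bool).length : ℝ)) ((M : ℝ) + 1)
            * ((1 : ℝ) / 2) ^ (σ : List Bool).length := by positivity
        exact sub_le_self _ h0
      · have hc : (σ : List Bool).length ≤ M + 1 := by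
          by_contra hcc
          exact h (by simp [mem_DF]; omega)
        have hminr : min (((σ : List Bool).length : ℝ)) ((M : ℝ) + 1)
            = ((σ : List Bool).length : ℝ) := by
          rw [min_eq_left]; exact_mod_cast hc
        rw [hminr, hf]
        simp
    · refine Summable.of_nonneg_of_le (fun σ => ?_) (fun σ => ?_) hfin
      · exact Set.indicator_nonneg (fun x _ => by positivity) σ
      · rw [Set.indicator_apply]
        split_ifs
        · exact le_rfl
        · positivity
  have := (tendsto_const_nhds (x := AvgRT D) (f := atTop (α := ℕ))).sub hdiff
  rw [sub_zero] at this
  refine this.congr fun M => by ring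
end Stmt15

namespace Stmt15
variable {D : Set (List Bool)}

theorem identity_sum (hpf : PrefixFree D) (hne : ∀ σ ∈ D, σ ≠ ([] : List Bool)) (n : ℕ) :
    (n : ℝ) = ∑ j ∈ Finset.range n, u D j * G D (n - 1 - j) := by
  calc (n : ℝ) = ∑ _i ∈ Finset.range n, (1 : ℝ) := by simp
  _ = ∑ i ∈ Finset.range n, ∑ j ∈ Finset.range (i + 1), u D j * T D (i - j) :=
      Finset.sum_congr rfl fun i _ => (key_identity hpf hne i).symm
  _ = ∑ j ∈ Finset.range n, ∑ i ∈ Finset.Ico j n, u D j * T D (i - j) :=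
      Finset.sum_comm' (by
        intro i j
        simp only [Finset.mem_range, Finset.mem_Ico, Nat.lt_succ_iff]
        omega)
  _ = ∑ j ∈ Finset.range n, u D j * G D (n - 1 - j) := by
      refine Finset.sum_congr rfl fun j hj => ?_
      have hjn : j < n := Finset.mem_range.mp hj
      rw [← Finset.mul_sum]
      congr 1
      rw [Finset.sum_Ico_eq_sum_range, G, show n - j = (n - 1 - j) + 1 by omega]
      exact Finset.sum_congr rfl fun t _ => by rw [Nat.add_sub_cancel_left]

theorem mu_ge_one
    (hsum : ∑' σ : D, ((1 : ℝ) / 2) ^ (σ : List Bool).length = 1)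
    (hne : ∀ σ ∈ D, σ ≠ ([] : List Bool))
    (hfin : Summable (fun σ : D =>
      ((σ : List Bool).length : ℝ) * ((1 : ℝ) / 2) ^ (σ : List Bool).length)) :
    1 ≤ AvgRT D := by
  rw [← hsum, AvgRT]
  refine Summable.tsum_le_tsum (fun σ => ?_) ((summable_w hne hfin)) hfin
  refine le_mul_of_one_le_left (by positivity) ?_
  exact_mod_cast len_pos hne σ

theorem eRen_lower (hpf : PrefixFree D) (hne : ∀ σ ∈ D, σ ≠ ([] : List Bool))
    (hsum : ∑' σ : D, ((1 : ℝ) / 2) ^ (σ : List Bool).length = 1)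
    (hfin : Summable (fun σ : D =>
      ((σ : List Bool).length : ℝ) * ((1 : ℝ) / 2) ^ (σ : List Bool).length))
    (n : ℕ) : ((n : ℝ) + 1) ≤ AvgRT D * eRen D n := by
  have h := identity_sum hpf hne (n + 1)
  push_cast at h
  rw [h, eRen, Finset.mul_sum]
  refine Finset.sum_le_sum fun j hj => ?_
  rw [mul_comm (AvgRT D) (u D j)]
  refine mul_le_mul_of_nonneg_left ?_ (u_nonneg j)
  exact (G_le_mu hne hsum hfin _)

theorem eRen_upper (hpf : PrefixFree D) (hne : ∀ σ ∈ D, σ ≠ ([] : List Bool))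
    (hsum : ∑' σ : D, ((1 : ℝ) / 2) ^ (σ : List Bool).length = 1)
    (hfin : Summable (fun σ : D =>
      ((σ : List Bool).length : ℝ) * ((1 : ℝ) / 2) ^ (σ : List Bool).length))
    (M n : ℕ) : eRen D n * G D M ≤ (n : ℝ) + M + 1 := by
  have h := identity_sum hpf hne (n + M + 1)
  push_cast at h
  rw [h, eRen, Finset.sum_mul]
  calc ∑ j ∈ Finset.range (n + 1), u D j * G D M
      ≤ ∑ j ∈ Finset.range (n + 1), u D j * G D (n + M - j) := by
        refine Finset.sum_le_sum fun j hj => ?_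
        refine mul_le_mul_of_nonneg_left ?_ (u_nonneg j)
        refine G_mono hne hsum hfin ?_
        have := Finset.mem_range.mp hj
        omega
  _ ≤ ∑ j ∈ Finset.range (n + M + 1), u D j * G D (n + M - j) := by
        refine Finset.sum_le_sum_of_subset_of_nonneg
          (Finset.range_subset_range.mpr (by omega)) fun j _ _ => ?_
        exact mul_nonneg (u_nonneg j) (le_trans zero_le_one (G_ge_one hne hsum hfin _))
end Stmt15

namespace Stmt15
variable {D : Set (List Bool)}

theorem eRen_nonneg (n : ℕ) : 0 ≤ eRen D n :=
  Finset.sum_nonneg fun j _ => u_nonneg j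

theorem expectation_eq (hpf : PrefixFree D) (hne : ∀ σ ∈ D, σ ≠ ([] : List Bool))
    (N : List Bool → ℕ)
    (hN : ∀ σ : List Bool, CatPrefix D (N σ) σ ∧ ∀ k, CatPrefix D k σ → k ≤ N σ)
    (n : ℕ) :
    (∑ f : Fin n → Bool, ((1 : ℝ) / 2) ^ n * (N (List.ofFn f) : ℝ)) = eRen D n - 1 := by
  classical
  have h1 : (∑ f : Fin n → Bool, (N (List.ofFn f) : ℝ)) = ∑ σ ∈ Sn n, (N σ : ℝ) := by
    rw [Sn, Finset.sum_image (fun x _ y _ h => List.ofFn_injective h)]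
  have h2 := congrArg (fun m : ℕ => (m : ℝ)) (sum_N_add_one hpf hne N hN n)
  push_cast at h2
  have h3 : (∑ σ ∈ Sn n, ((N σ : ℝ) + 1)) = (∑ σ ∈ Sn n, (N σ : ℝ)) + 2 ^ n := by
    rw [Finset.sum_add_distrib, Finset.sum_const, card_Sn]
    push_cast
    ring
  rw [h3] at h2
  have h4 : (∑ σ ∈ Sn n, (N σ : ℝ))
      = (∑ j ∈ Finset.range (n + 1), (W D j : ℝ) * 2 ^ (n - j)) - 2 ^ n := by
    linarith [h2]
  rw [← Finset.mul_sum, h1, h4, mul_sub]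
  have h5 : ((1 : ℝ) / 2) ^ n * 2 ^ n = 1 := by
    rw [← mul_pow]; norm_num
  rw [Finset.mul_sum, eRen]
  congr 1
  refine Finset.sum_congr rfl fun j hj => ?_
  have hjn : j ≤ n := Nat.lt_succ_iff.mp (Finset.mem_range.mp hj)
  rw [u]
  have hpow : ((1 : ℝ) / 2) ^ n = ((1 : ℝ) / 2) ^ j * ((1 : ℝ) / 2) ^ (n - j) := by
    rw [← pow_add]; congr 1; omega
  have hpow2 : ((1 : ℝ) / 2) ^ (n - j) * (2 : ℝ) ^ (n - j) = 1 := by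
    rw [← mul_pow]; norm_num
  calc ((1 : ℝ) / 2) ^ n * ((W D j : ℝ) * 2 ^ (n - j))
      = ((1 : ℝ) / 2) ^ j * (((1 : ℝ) / 2) ^ (n - j) * (2 : ℝ) ^ (n - j)) * (W D j : ℝ) := by
        rw [hpow]; ring
  _ = ((1 : ℝ) / 2) ^ j * (W D j : ℝ) := by rw [hpow2]; ring

theorem main_limit (hpf : PrefixFree D) (hne : ∀ σ ∈ D, σ ≠ ([] : List Bool))
    (hsum : ∑' σ : D, ((1 : ℝ) / 2) ^ (σ : List Bool).length = 1)
    (hfin : Summable (fun σ : D =>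
      ((σ : List Bool).length : ℝ) * ((1 : ℝ) / 2) ^ (σ : List Bool).length)) :
    Tendsto (fun n : ℕ => (1 / (n : ℝ)) * (eRen D n - 1)) atTop (nhds (1 / AvgRT D)) := by
  have hμ1 : 1 ≤ AvgRT D := mu_ge_one hsum hne hfin
  have hμ0 : 0 < AvgRT D := lt_of_lt_of_le one_pos hμ1
  rw [Metric.tendsto_atTop]
  intro ε hε
  have hGt : Tendsto (fun M => 1 / G D M) atTop (nhds (1 / AvgRT D)) :=
    tendsto_const_nhds.div (G_tendsto hne hsum hfin) (ne_of_gt hμ0)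
  obtain ⟨M, hM⟩ : ∃ M, 1 / G D M < 1 / AvgRT D + ε / 2 :=
    (hGt.eventually_lt_const (show 1 / AvgRT D < 1 / AvgRT D + ε / 2 by linarith)).exists
  obtain ⟨K, hK⟩ := exists_nat_gt (max (1 / ε) (((M : ℝ) + 1) / (ε / 2)))
  refine ⟨K + 1, fun n hn => ?_⟩
  have hn1 : 1 ≤ n := by omega
  have hnR : (0 : ℝ) < n := by exact_mod_cast Nat.pos_of_ne_zero (by omega)
  have hKn : (K : ℝ) < n := by exact_mod_cast (by omega : K < n)
  have h1 : 1 / ε < (n : ℝ) := lt_trans (lt_of_le_of_lt (le_max_left _ _) hK) hKn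
  have h2 : ((M : ℝ) + 1) / (ε / 2) < (n : ℝ) :=
    lt_trans (lt_of_le_of_lt (le_max_right _ _) hK) hKn
  have h1' : 1 / (n : ℝ) < ε := by
    rw [div_lt_iff₀ hnR]
    have := (div_lt_iff₀ hε).mp h1
    linarith
  have h2' : ((M : ℝ) + 1) / (n : ℝ) < ε / 2 := by
    rw [div_lt_iff₀ hnR]
    have := (div_lt_iff₀ (half_pos hε)).mp h2
    linarith
  set s := (1 / (n : ℝ)) * (eRen D n - 1) with hs
  have hg1 : 1 ≤ G D M := G_ge_one hne hsum hfin M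
  have hg0 : 0 < G D M := lt_of_lt_of_le one_pos hg1
  have hEl : ((n : ℝ) + 1) ≤ AvgRT D * eRen D n := eRen_lower hpf hne hsum hfin n
  have hEu : eRen D n * G D M ≤ (n : ℝ) + M + 1 := eRen_upper hpf hne hsum hfin M n
  have hE0 : 0 ≤ eRen D n := eRen_nonneg n
  rw [Real.dist_eq, abs_lt]
  constructor
  · -- lower bound : -ε < s - 1/μ
    have hlow : 1 / AvgRT D - 1 / (n : ℝ) ≤ s := by
      rw [hs]
      have ha : (1 / AvgRT D) * AvgRT D = 1 := by field_simp
      have hb : (1 / (n : ℝ)) * n = 1 := by field_simp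
      have hμn : 0 < (n : ℝ) * AvgRT D := mul_pos hnR hμ0
      nlinarith [hEl, ha, hb, hnR, hμ0, mul_pos hnR hμ0]
    linarith
  · -- upper bound : s - 1/μ < ε
    have e_le : eRen D n ≤ ((n : ℝ) + M + 1) / G D M := (le_div_iff₀ hg0).mpr hEu
    have hs' : s = (eRen D n - 1) / n := by rw [hs, one_div, inv_mul_eq_div]
    have step : s ≤ (((n : ℝ) + M + 1) / G D M) / n := by
      rw [hs']
      gcongr
      linarith
    have heq : (((n : ℝ) + M + 1) / G D M) / n
        = (n : ℝ) / (G D M * n) + ((M : ℝ) + 1) / (G D M * n) := by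
      rw [div_div, ← add_div]
      ring_nf
    have hA : (n : ℝ) / (G D M * n) = 1 / G D M := by
      rw [mul_comm, ← div_div, div_self (ne_of_gt hnR)]
    have hB : ((M : ℝ) + 1) / (G D M * n) ≤ ((M : ℝ) + 1) / n := by
      gcongr
      exact le_mul_of_one_le_left (le_of_lt hnR) hg1
    have hup : s ≤ 1 / G D M + ((M : ℝ) + 1) / n := by
      rw [heq, hA] at step
      linarith
    linarith

end Stmt15

/-- Let `D` be a prefix-free set of nonempty strings with `Σ_{σ∈D} 2^{-|σ|} = 1`
and finite `AvgRT(D)`, and let `N σ` be the largest `k` such that some initial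
segment of `σ` is a concatenation of `k` elements of `D` (the number of output
symbols of the DDG-functional on input `σ`).  Then
`lim_n (1/n) Σ_{σ∈2^n} 2^{-n} N(σ) = 1/AvgRT(D)`; that is, the extraction rate
`Rate(Φ, λ) = limsup_n (1/n) Σ_{σ∈2^n} 2^{-n} N(σ)` equals `1/AvgRT(D)`. -/
theorem stmt15 (D : Set (List Bool))
    (hne : ∀ σ ∈ D, σ ≠ ([] : List Bool))
    (hpf : PrefixFree D)
    (hsum : ∑' σ : D, ((1 : ℝ) / 2) ^ (σ : List Bool).length = 1)
    (hfin : Summable (fun σ : D =>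
      ((σ : List Bool).length : ℝ) * ((1 : ℝ) / 2) ^ (σ : List Bool).length))
    (N : List Bool → ℕ)
    (hN : ∀ σ : List Bool, CatPrefix D (N σ) σ ∧ ∀ k, CatPrefix D k σ → k ≤ N σ) :
    Tendsto (fun n : ℕ =>
        (1 / n : ℝ) * ∑ f : Fin n → Bool, ((1 : ℝ) / 2) ^ n * (N (List.ofFn f) : ℝ))
      atTop (nhds (1 / AvgRT D)) ∧
    limsup (fun n : ℕ =>
        (1 / n : ℝ) * ∑ f : Fin n → Bool, ((1 : ℝ) / 2) ^ n * (N (List.ofFn f) : ℝ))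
      atTop = 1 / AvgRT D := by
  have hfun : (fun n : ℕ =>
      (1 / n : ℝ) * ∑ f : Fin n → Bool, ((1 : ℝ) / 2) ^ n * (N (List.ofFn f) : ℝ))
      = fun n : ℕ => (1 / (n : ℝ)) * (Stmt15.eRen D n - 1) :=
    funext fun n => by rw [Stmt15.expectation_eq hpf hne N hN n]
  rw [hfun]
  have h := Stmt15.main_limit hpf hne hsum hfin
  exact ⟨h, h.limsup_eq⟩
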